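/- Let X be a countably infinite set and let E be any set function on finite subsets of X. If the lexicographic composition L_E preserves path independence over the class C^res of responsive choice functions, then (1) G_E is threshold-linear, and (2) R_E is cardinal-linear on Dom(R_E). -/

import Mathlib

/-! Common definitions: choice functions on a countably infinite set of items,
lexicographic composition subject to an exclusion function, and the various
properties from the paper. Items form a type `X`; finite subsets of `X` are
`Finset X`; set functions are maps `Finset X → Set X`. -/

open scoped Classical

variable {X : Type*}

/-- A choice function selects a subset of its input. -/
def IsChoice (C : Finset X → Finset X) : Prop := ∀ Y, C Y ⊆ Y

/-- Lexicographic composition of `C1` and `C2` subject to the exclusion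
function `E`:  `Y ↦ C1(Y) ∪ C2(Y \ E(C1(Y)))`. -/
noncomputable def lexComp (E : Finset X → Set X) (C1 C2 : Finset X → Finset X) :
    Finset X → Finset X :=
  fun Y => C1 Y ∪ C2 (Y.filter (fun y => y ∉ E (C1 Y)))

/-- Path independence: `C(Y ∪ Y') = C(C(Y) ∪ C(Y'))`. -/
def PathIndependent (C : Finset X → Finset X) : Prop :=
  ∀ Y Y' : Finset X, C (Y ∪ Y') = C (C Y ∪ C Y')

/-- Substitutes: the rejection function is monotone. -/
def Substitutes (C : Finset X → Finset X) : Prop :=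
  ∀ Y Y' : Finset X, Y ⊆ Y' → Y \ C Y ⊆ Y' \ C Y'

/-- Size monotonicity (law of aggregate demand). -/
def SizeMonotonic (C : Finset X → Finset X) : Prop :=
  ∀ Y Y' : Finset X, Y ⊆ Y' → (C Y).card ≤ (C Y').card

/-- Consistency: `C(Y') ⊆ Y ⊆ Y'` implies `C(Y) = C(Y')`. -/
def Consistent (C : Finset X → Finset X) : Prop :=
  ∀ Y Y' : Finset X, C Y' ⊆ Y → Y ⊆ Y' → C Y = C Y'

/-- The `q` highest-ranked acceptable elements of `Y`, with respect to a linear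
order `r` on `X ∪ {∅}` (modelled as `Option X`, `none` playing the role of the
outside option `∅`): `y` is chosen iff `y ≻ ∅` and fewer than `q` acceptable
elements of `Y` are ranked strictly above `y`. -/
noncomputable def topChoice (r : LinearOrder (Option X)) (q : ℕ) (Y : Finset X) : Finset X :=
  Y.filter (fun y => r.lt none (some y) ∧
    (Y.filter (fun z => r.lt none (some z) ∧ r.lt (some y) (some z))).card < q)

/-- `C` is responsive to the linear order `r` on `X ∪ {∅}` and quota `q`. -/
def ResponsiveWith (r : LinearOrder (Option X)) (q : ℕ) (C : Finset X → Finset X) : Prop :=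
  ∀ Y : Finset X, C Y = topChoice r q Y

/-- Responsive choice functions (the class `C^res`). -/
def Responsive (C : Finset X → Finset X) : Prop :=
  ∃ (r : LinearOrder (Option X)) (q : ℕ), ResponsiveWith r q C

/-- Single-valued responsive choice functions (the class `C^{sv-res}`): quota 1. -/
def SVResponsive (C : Finset X → Finset X) : Prop :=
  ∃ r : LinearOrder (Option X), ResponsiveWith r 1 C

/-- `E` is threshold-linear with cardinal reuse with respect to the parameters
`t ∈ ℕ ∪ {0,∞}`, `K ⊆ X` and the chain `∅ = T^0 ⊆ T^1 ⊆ ⋯ ⊆ T^t ⊆ X \ K`: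
for every finite `Z`, if `|Z| < t` then `E(Z) = (Z \ T^{|Z|}) ∪ K`, and
otherwise `G_E(Z) = E(Z) ∪ Z = X`. -/
def TLCRWith (E : Finset X → Set X) (t : ℕ∞) (K : Set X) (T : ℕ → Set X) : Prop :=
  T 0 = ∅ ∧ (∀ n : ℕ, (n : ℕ∞) < t → T n ⊆ T (n + 1)) ∧
  (∀ n : ℕ, (n : ℕ∞) ≤ t → T n ⊆ Kᶜ) ∧
  ∀ Z : Finset X,
    ((Z.card : ℕ∞) < t → E Z = ((Z : Set X) \ T Z.card) ∪ K) ∧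
    (¬ (Z.card : ℕ∞) < t → E Z ∪ (Z : Set X) = Set.univ)

/-- `E` is threshold-linear with cardinal reuse (for some parameters). -/
def TLCR (E : Finset X → Set X) : Prop :=
  ∃ (t : ℕ∞) (K : Set X) (T : ℕ → Set X), TLCRWith E t K T

/-- A dilation `D` is threshold-linear (with threshold `t`), where `K = D(∅)`:
`D(Z) = Z ∪ K` when `|Z| < t`, and `D(Z) = X` otherwise. -/
def ThresholdLinear (D : Finset X → Set X) : Prop :=
  ∃ t : ℕ∞, ∀ Z : Finset X,
    ((Z.card : ℕ∞) < t → D Z = (Z : Set X) ∪ D ∅) ∧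
    (¬ (Z.card : ℕ∞) < t → D Z = Set.univ)

/-- A set function `F` (valued inside its argument) is cardinal-linear:
there is a weakly increasing sequence `∅ = T^0 ⊆ T^1 ⊆ ⋯` with
`F(Z) = Z ∩ T^{|Z|}` for every finite `Z`. -/
def CardinalLinear (F : Finset X → Set X) : Prop :=
  ∃ T : ℕ → Set X, T 0 = ∅ ∧ Monotone T ∧
    ∀ Z : Finset X, F Z = (Z : Set X) ∩ T Z.card

section Equiv

variable (s : Setoid X)

/-- A finite set is feasible if it contains at most one element of each
equivalence class. -/
def Feasible (Z : Finset X) : Prop :=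
  ∀ x ∈ Z, ∀ z ∈ Z, x ≠ z → ¬ s.r x z

/-- A choice function is many-to-one if it always selects a feasible set. -/
def ManyToOne (C : Finset X → Finset X) : Prop :=
  ∀ Y : Finset X, Feasible s (C Y)

/-- `I_Z`: the union of the equivalence classes of the members of `Z`. -/
def IClass (Z : Finset X) : Set X := {y | ∃ x ∈ Z, s.r y x}

/-- `E` is equivalence-excluding: `Z ∪ E(Z) ⊇ I_Z` for every feasible `Z`. -/
def EquivExcluding (E : Finset X → Set X) : Prop :=
  ∀ Z : Finset X, Feasible s Z → IClass s Z ⊆ (Z : Set X) ∪ E Z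

/-- `Cbar` completes `C`: whenever `Cbar(Y)` is feasible, `Cbar(Y) = C(Y)`. -/
def Completes (Cbar C : Finset X → Finset X) : Prop :=
  ∀ Y : Finset X, Feasible s (Cbar Y) → Cbar Y = C Y

/-- `E` is many-to-one threshold-linear with cardinal reuse with the parameters
`t`, `K`, `{T^n}`: the displayed condition holds for every *feasible* `Z`:
if `Z ∪ K ≠ X` and `|Z| < t` then `E(Z) = (Z \ T^{|Z|}) ∪ K`, and otherwise
`G_E(Z) = X`. -/
def MtoTLCRWith (E : Finset X → Set X) (t : ℕ∞) (K : Set X) (T : ℕ → Set X) : Prop :=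
  T 0 = ∅ ∧ (∀ n : ℕ, (n : ℕ∞) < t → T n ⊆ T (n + 1)) ∧
  (∀ n : ℕ, (n : ℕ∞) ≤ t → T n ⊆ Kᶜ) ∧
  ∀ Z : Finset X, Feasible s Z →
    (((Z : Set X) ∪ K ≠ Set.univ ∧ (Z.card : ℕ∞) < t) →
      E Z = ((Z : Set X) \ T Z.card) ∪ K) ∧
    (¬ ((Z : Set X) ∪ K ≠ Set.univ ∧ (Z.card : ℕ∞) < t) →
      E Z ∪ (Z : Set X) = Set.univ)

end Equiv
namespace PIWork

noncomputable def okey (enc : X → ℕ) (l : List X) : Option X → ℤ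
  | none => 0
  | some x => if x ∈ l then (l.length : ℤ) - (l.idxOf x : ℤ) else -(enc x : ℤ) - 1

lemma okey_inj {enc : X → ℕ} (henc : Function.Injective enc) (l : List X) :
    Function.Injective (okey enc l) := by
  intro a b hab
  have hpos : ∀ x : X, x ∈ l → 0 < okey enc l (some x) := by
    intro x hx
    simp only [okey, if_pos hx]
    have := List.idxOf_lt_length_iff.2 hx
    omega
  have hneg : ∀ x : X, x ∉ l → okey enc l (some x) < 0 := by
    intro x hx
    simp only [okey, if_neg hx]
    omega
  match a, b with
  | none, none => rfl
  | none, some y =>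
      exfalso
      by_cases hy : y ∈ l
      · exact absurd hab.symm (ne_of_gt (hpos y hy))
      · exact absurd hab.symm (ne_of_lt (hneg y hy))
  | some y, none =>
      exfalso
      by_cases hy : y ∈ l
      · exact absurd hab (ne_of_gt (hpos y hy))
      · exact absurd hab (ne_of_lt (hneg y hy))
  | some x, some y =>
      by_cases hx : x ∈ l <;> by_cases hy : y ∈ l
      · simp only [okey, if_pos hx, if_pos hy] at hab
        have hx' := List.idxOf_lt_length_iff.2 hx
        have hy' := List.idxOf_lt_length_iff.2 hy
        have : l.idxOf x = l.idxOf y := by omega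
        exact congrArg some ((List.idxOf_inj hx).1 this)
      · exact absurd hab (ne_of_gt (lt_trans (hneg y hy) (hpos x hx)))
      · exact absurd hab (ne_of_lt (lt_trans (hneg x hx) (hpos y hy)))
      · simp only [okey, if_neg hx, if_neg hy] at hab
        have : enc x = enc y := by omega
        exact congrArg some (henc this)

noncomputable def mkO (enc : X → ℕ) (henc : Function.Injective enc) (l : List X) :
    LinearOrder (Option X) :=
  LinearOrder.lift' (okey enc l) (okey_inj henc l)

lemma mkO_lt {enc : X → ℕ} (henc : Function.Injective enc) (l : List X) (a b : Option X) :
    (mkO enc henc l).lt a b ↔ okey enc l a < okey enc l b := Iff.rfl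

lemma mkO_none_lt {enc : X → ℕ} (henc : Function.Injective enc) (l : List X) (y : X) :
    (mkO enc henc l).lt none (some y) ↔ y ∈ l := by
  rw [mkO_lt]
  by_cases hy : y ∈ l
  · simp only [okey, if_pos hy]
    have := List.idxOf_lt_length_iff.2 hy
    constructor
    · intro _; exact hy
    · intro _; omega
  · simp only [okey, if_neg hy]
    constructor
    · intro h; omega
    · intro h; exact absurd h hy

lemma mkO_some_lt {enc : X → ℕ} (henc : Function.Injective enc) (l : List X) {y z : X}
    (hy : y ∈ l) (hz : z ∈ l) :
    (mkO enc henc l).lt (some y) (some z) ↔ l.idxOf z < l.idxOf y := by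
  rw [mkO_lt]
  simp only [okey, if_pos hy, if_pos hz]
  have := List.idxOf_lt_length_iff.2 hy
  have := List.idxOf_lt_length_iff.2 hz
  omega

/-- characterization of `topChoice` for `mkO`. -/
lemma topChoice_mkO {enc : X → ℕ} (henc : Function.Injective enc) (l : List X) (q : ℕ)
    (Y : Finset X) :
    topChoice (mkO enc henc l) q Y =
      Y.filter (fun y => y ∈ l ∧
        (Y.filter (fun z => z ∈ l ∧ l.idxOf z < l.idxOf y)).card < q) := by
  unfold topChoice
  apply Finset.filter_congr
  intro y _
  rw [mkO_none_lt]
  apply and_congr_right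
  intro hyl
  have hfil : (Y.filter (fun z => (mkO enc henc l).lt none (some z) ∧
      (mkO enc henc l).lt (some y) (some z))) =
      (Y.filter (fun z => z ∈ l ∧ l.idxOf z < l.idxOf y)) := by
    apply Finset.filter_congr
    intro z _
    by_cases hz : z ∈ l
    · rw [mkO_none_lt, mkO_some_lt henc l hyl hz]
    · constructor
      · rintro ⟨h1, _⟩; exact absurd ((mkO_none_lt henc l z).1 h1) hz
      · rintro ⟨h1, _⟩; exact absurd h1 hz
  rw [hfil]

lemma topChoice_subset (r : LinearOrder (Option X)) (q : ℕ) (Y : Finset X) :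
    topChoice r q Y ⊆ Y := Finset.filter_subset _ _

lemma isChoice_topChoice (r : LinearOrder (Option X)) (q : ℕ) :
    ∀ Y : Finset X, topChoice r q Y ⊆ Y := fun _ => Finset.filter_subset _ _

/-- `CA'`: if at most `q` elements of `l` lie in `Y`, the choice is all of them. -/
lemma topChoice_all {enc : X → ℕ} (henc : Function.Injective enc) (l : List X) (q : ℕ)
    (Y : Finset X) (hq : (Y.filter (· ∈ l)).card ≤ q) :
    topChoice (mkO enc henc l) q Y = Y.filter (· ∈ l) := by
  rw [topChoice_mkO]
  apply Finset.filter_congr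
  intro y hy
  by_cases hyl : y ∈ l
  · simp only [hyl, true_and, iff_true]
    have hsub : (Y.filter (fun z => z ∈ l ∧ l.idxOf z < l.idxOf y)) ⊆
        (Y.filter (· ∈ l)).erase y := by
      intro z hz
      simp only [Finset.mem_filter] at hz
      rw [Finset.mem_erase]
      refine ⟨?_, Finset.mem_filter.2 ⟨hz.1, hz.2.1⟩⟩
      intro hzy; subst hzy; exact lt_irrefl _ hz.2.2
    have h1 : ((Y.filter (· ∈ l)).erase y).card < (Y.filter (· ∈ l)).card := by
      apply Finset.card_erase_lt_of_mem
      exact Finset.mem_filter.2 ⟨hy, hyl⟩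
    calc (Y.filter (fun z => z ∈ l ∧ l.idxOf z < l.idxOf y)).card
        ≤ ((Y.filter (· ∈ l)).erase y).card := Finset.card_le_card hsub
      _ < (Y.filter (· ∈ l)).card := h1
      _ ≤ q := hq
  · simp [hyl]

/-- all-variant with `q = l.length`. -/
lemma topChoice_all' {enc : X → ℕ} (henc : Function.Injective enc) (l : List X)
    (Y : Finset X) :
    topChoice (mkO enc henc l) l.length Y = Y.filter (· ∈ l) := by
  apply topChoice_all
  calc (Y.filter (· ∈ l)).card ≤ l.toFinset.card := by
        apply Finset.card_le_card
        intro z hz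
        simp only [Finset.mem_filter] at hz
        simpa using hz.2
    _ ≤ l.length := l.toFinset_card_le

/-- `BLOCK`: with quota `l₁.length` and all of `l₁` present, exactly `l₁` is chosen. -/
lemma topChoice_block {enc : X → ℕ} (henc : Function.Injective enc) (l₁ l₂ : List X)
    (hnd : (l₁ ++ l₂).Nodup) (Y : Finset X) (hsub : ∀ a ∈ l₁, a ∈ Y) :
    topChoice (mkO enc henc (l₁ ++ l₂)) l₁.length Y = l₁.toFinset := by
  have hnd1 : l₁.Nodup := hnd.of_append_left
  rw [topChoice_mkO]
  ext y
  simp only [Finset.mem_filter, List.mem_toFinset]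
  constructor
  · rintro ⟨hyY, hyl, hcard⟩
    by_contra hy1
    have hy2 : y ∈ l₂ := by
      rcases List.mem_append.1 hyl with h | h
      · exact absurd h hy1
      · exact h
    -- all of l₁ is in the predecessor set
    have hidx : (l₁ ++ l₂).idxOf y = l₁.length + l₂.idxOf y :=
      List.idxOf_append_of_notMem hy1
    have hsub2 : l₁.toFinset ⊆ Y.filter (fun z => z ∈ l₁ ++ l₂ ∧
        (l₁ ++ l₂).idxOf z < (l₁ ++ l₂).idxOf y) := by
      intro z hz
      rw [List.mem_toFinset] at hz
      refine Finset.mem_filter.2 ⟨hsub z hz, List.mem_append.2 (Or.inl hz), ?_⟩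
      rw [List.idxOf_append_of_mem hz, hidx]
      have := List.idxOf_lt_length_iff.2 hz
      omega
    have : l₁.length ≤ (Y.filter (fun z => z ∈ l₁ ++ l₂ ∧
        (l₁ ++ l₂).idxOf z < (l₁ ++ l₂).idxOf y)).card := by
      calc l₁.length = l₁.toFinset.card := (List.toFinset_card_of_nodup hnd1).symm
        _ ≤ _ := Finset.card_le_card hsub2
    omega
  · intro hy1
    refine ⟨hsub y hy1, List.mem_append.2 (Or.inl hy1), ?_⟩
    have hidx : (l₁ ++ l₂).idxOf y = l₁.idxOf y := List.idxOf_append_of_mem hy1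
    have hsub2 : Y.filter (fun z => z ∈ l₁ ++ l₂ ∧
        (l₁ ++ l₂).idxOf z < (l₁ ++ l₂).idxOf y) ⊆ l₁.toFinset.erase y := by
      intro z hz
      simp only [Finset.mem_filter] at hz
      obtain ⟨hzY, hzl, hzidx⟩ := hz
      have hz1 : z ∈ l₁ := by
        by_contra hz1
        rw [List.idxOf_append_of_notMem hz1, hidx] at hzidx
        have := List.idxOf_le_length (a := y) (l := l₁)
        omega
      rw [Finset.mem_erase, List.mem_toFinset]
      refine ⟨?_, hz1⟩
      intro hzy; subst hzy
      exact lt_irrefl _ hzidx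
    have h2 : (l₁.toFinset.erase y).card < l₁.toFinset.card :=
      Finset.card_erase_lt_of_mem (List.mem_toFinset.2 hy1)
    have h3 : l₁.toFinset.card = l₁.length := List.toFinset_card_of_nodup hnd1
    have := Finset.card_le_card hsub2
    omega

/-- `TAKE1`: quota 1, `a` present and all strictly earlier elements absent: choice `{a}`. -/
lemma topChoice_take1 {enc : X → ℕ} (henc : Function.Injective enc) (l : List X)
    (Y : Finset X) (a : X) (hal : a ∈ l) (haY : a ∈ Y)
    (hmin : ∀ b ∈ l, b ∈ Y → b ≠ a → l.idxOf a < l.idxOf b) :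
    topChoice (mkO enc henc l) 1 Y = {a} := by
  rw [topChoice_mkO]
  ext y
  simp only [Finset.mem_filter, Finset.mem_singleton]
  constructor
  · rintro ⟨hyY, hyl, hcard⟩
    by_contra hya
    have : a ∈ Y.filter (fun z => z ∈ l ∧ l.idxOf z < l.idxOf y) :=
      Finset.mem_filter.2 ⟨haY, hal, hmin y hyl hyY hya⟩
    have := Finset.card_pos.2 ⟨a, this⟩
    omega
  · intro hya
    rw [hya]
    refine ⟨haY, hal, ?_⟩
    have : Y.filter (fun z => z ∈ l ∧ l.idxOf z < l.idxOf a) = ∅ := by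
      apply Finset.filter_eq_empty_iff.2
      intro z hzY
      rintro ⟨hzl, hzidx⟩
      by_cases hza : z = a
      · subst hza; exact lt_irrefl _ hzidx
      · exact absurd hzidx (not_lt.2 (le_of_lt (hmin z hzl hzY hza)))
    rw [this]
    simp


/-! ### lexComp helpers -/

section Lex
variable (E : Finset X → Set X)

lemma lex_def (C1 C2 : Finset X → Finset X) (Y : Finset X) :
    lexComp E C1 C2 Y = C1 Y ∪ C2 (Y.filter (fun y => y ∉ E (C1 Y))) := rfl

lemma lex_eq {C1 C2 : Finset X → Finset X} {Y A : Finset X}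
    (h1 : C1 Y = A) (h2 : C2 (Y.filter (fun y => y ∉ E A)) ⊆ A) :
    lexComp E C1 C2 Y = A := by
  rw [lex_def, h1]
  exact Finset.union_eq_left.2 h2

lemma lex_subset {C1 C2 : Finset X → Finset X} (h1 : IsChoice C1) (h2 : IsChoice C2)
    (Y : Finset X) : lexComp E C1 C2 Y ⊆ Y :=
  Finset.union_subset (h1 Y) ((h2 _).trans (Finset.filter_subset _ _))

end Lex

/-! ### The main development -/

section Main

variable (E : Finset X → Set X)

/-- the preservation hypothesis, specialized -/
def Hpres : Prop :=
  ∀ C1 C2 : Finset X → Finset X, IsChoice C1 → IsChoice C2 →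
    Responsive C1 → Responsive C2 → PathIndependent (lexComp E C1 C2)

variable {E}

lemma hpres_pi {E : Finset X → Set X} (enc : X → ℕ) (henc : Function.Injective enc) (hpres : Hpres E) (l₁ : List X) (q₁ : ℕ) (l₂ : List X) (q₂ : ℕ) :
    PathIndependent (lexComp E (topChoice (mkO enc henc l₁) q₁)
      (topChoice (mkO enc henc l₂) q₂)) :=
  hpres _ _ (isChoice_topChoice _ _) (isChoice_topChoice _ _)
    ⟨_, _, fun _ => rfl⟩ ⟨_, _, fun _ => rfl⟩

lemma filter_mem_toList (Y Z : Finset X) :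
    Y.filter (fun y => y ∈ Z.toList) = Y ∩ Z := by
  ext y; simp [Finset.mem_toList, Finset.mem_inter]


lemma indexOf_pair_lt {e x : X} (hex : e ≠ x) :
    List.idxOf e [e, x] < List.idxOf x [e, x] := by
  rw [List.idxOf_cons_self, List.idxOf_cons_ne _ hex]
  omega

/-- F1: `K ⊆ E Z ∪ Z` for every `Z`. -/
lemma F1 {E : Finset X → Set X} (enc : X → ℕ) (henc : Function.Injective enc) (hpres : Hpres E) (Z : Finset X) : E ∅ ⊆ E Z ∪ (Z : Set X) := by
  intro k hk
  by_contra hkn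
  simp only [Set.mem_union, Finset.mem_coe, not_or] at hkn
  obtain ⟨hk1, hk2⟩ := hkn
  set C1 := topChoice (mkO enc henc Z.toList) Z.toList.length with hC1
  set C2 := topChoice (mkO enc henc [k]) 1 with hC2
  have hAll1 : ∀ Y, C1 Y = Y ∩ Z := by
    intro Y; rw [hC1, topChoice_all' henc, filter_mem_toList]
  have hch2 : IsChoice C2 := isChoice_topChoice _ _
  have hPI := hpres_pi enc henc hpres Z.toList Z.toList.length [k] 1 Z {k}
  have hLZ : lexComp E C1 C2 Z = Z :=
    lex_eq E (by rw [hAll1, Finset.inter_self]) ((hch2 _).trans (Finset.filter_subset _ _))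
  have hLk : lexComp E C1 C2 {k} = ∅ := by
    rw [lex_def]
    have h1 : C1 {k} = ∅ := by rw [hAll1]; ext y; simp; rintro rfl; exact hk2
    rw [h1]
    have h2 : ({k} : Finset X).filter (fun y => y ∉ E (∅ : Finset X)) = ∅ := by
      rw [Finset.filter_eq_empty_iff]
      intro y hy hyE
      rw [Finset.mem_singleton] at hy; subst hy
      exact hyE hk
    rw [h2]
    have := Finset.subset_empty.1 (hch2 ∅)
    rw [this, Finset.union_empty]
  have hkin : k ∈ lexComp E C1 C2 (Z ∪ {k}) := by
    rw [lex_def]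
    have h1 : C1 (Z ∪ {k}) = Z := by
      rw [hAll1]; ext y; simp only [Finset.mem_inter, Finset.mem_union, Finset.mem_singleton]
      constructor
      · rintro ⟨_, h⟩; exact h
      · intro h; exact ⟨Or.inl h, h⟩
    rw [h1]
    apply Finset.mem_union_right
    have hkmenu : k ∈ (Z ∪ {k}).filter (fun y => y ∉ E Z) := by
      simp [hk1]
    have hval := topChoice_take1 henc [k] ((Z ∪ {k}).filter (fun y => y ∉ E Z)) k
      (by simp) hkmenu (by intro b hb _ hbk; simp only [List.mem_singleton] at hb; exact absurd hb hbk)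
    rw [hC2, hval]; simp
  rw [hPI, hLZ, hLk, Finset.union_empty, hLZ] at hkin
  exact hk2 hkin

/-- `Dom`: the gross exclusion is not everything. -/
def DomE (E : Finset X → Set X) (Z : Finset X) : Prop := E Z ∪ (Z : Set X) ≠ Set.univ

/-- F2: on `Dom`, `E Z ∪ Z = Z ∪ K`. -/
lemma F2 {E : Finset X → Set X} (enc : X → ℕ) (henc : Function.Injective enc) (hpres : Hpres E) (Z : Finset X) (hdom : DomE E Z) :
    E Z ∪ (Z : Set X) = (Z : Set X) ∪ E ∅ := by
  -- pick x outside
  have hx : ∃ x, x ∉ E Z ∪ (Z : Set X) := by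
    by_contra h
    push_neg at h
    exact hdom (Set.eq_univ_iff_forall.2 h)
  obtain ⟨x, hxn⟩ := hx
  simp only [Set.mem_union, Finset.mem_coe, not_or] at hxn
  obtain ⟨hxE, hxZ⟩ := hxn
  have hxK : x ∉ E ∅ := fun h => by
    have := F1 enc henc hpres Z h
    simp only [Set.mem_union, Finset.mem_coe] at this
    tauto
  apply Set.Subset.antisymm
  · rintro e (heE | heZ)
    · by_contra hen
      simp only [Set.mem_union, Finset.mem_coe, not_or] at hen
      obtain ⟨heZ, heK⟩ := hen
      -- mechanism
      have hex : e ≠ x := fun h => hxE (h ▸ heE)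
      set C1 := topChoice (mkO enc henc Z.toList) Z.toList.length with hC1
      set C2 := topChoice (mkO enc henc [e, x]) 1 with hC2
      have hAll1 : ∀ Y, C1 Y = Y ∩ Z := by
        intro Y; rw [hC1, topChoice_all' henc, filter_mem_toList]
      have hch2 : IsChoice C2 := isChoice_topChoice _ _
      have hPI := hpres_pi enc henc hpres Z.toList Z.toList.length [e, x] 1 Z {e, x}
      have hLZ : lexComp E C1 C2 Z = Z :=
        lex_eq E (by rw [hAll1, Finset.inter_self]) ((hch2 _).trans (Finset.filter_subset _ _))
      have hLex : lexComp E C1 C2 {e, x} = {e} := by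
        rw [lex_def]
        have h1 : C1 {e, x} = ∅ := by
          rw [hAll1]; ext y
          simp only [Finset.mem_inter, Finset.mem_insert, Finset.mem_singleton,
            Finset.notMem_empty, iff_false, not_and]
          rintro (rfl | rfl)
          · exact heZ
          · exact hxZ
        rw [h1]
        have hemenu : e ∈ ({e, x} : Finset X).filter (fun y => y ∉ E (∅ : Finset X)) := by
          simp [heK]
        have hval := topChoice_take1 henc [e, x] _ e (by simp) hemenu
          (by
            intro b hb _ hbe
            simp only [List.mem_cons, List.mem_singleton, List.not_mem_nil, or_false] at hb
            rcases hb with rfl | rfl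
            · exact absurd rfl hbe
            · exact indexOf_pair_lt hex)
        rw [hC2, hval]
        ext y; simp
      have hxin : x ∈ lexComp E C1 C2 (Z ∪ {e, x}) := by
        rw [lex_def]
        have h1 : C1 (Z ∪ {e, x}) = Z := by
          rw [hAll1]; ext y
          simp only [Finset.mem_inter, Finset.mem_union, Finset.mem_insert, Finset.mem_singleton]
          constructor
          · rintro ⟨_, h⟩; exact h
          · intro h; exact ⟨Or.inl h, h⟩
        rw [h1]
        apply Finset.mem_union_right
        have hxmenu : x ∈ (Z ∪ {e, x}).filter (fun y => y ∉ E Z) := by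
          simp [hxE]
        have hval := topChoice_take1 henc [e, x] _ x (by simp) hxmenu
          (by
            intro b hb hbY hbx
            simp only [List.mem_cons, List.mem_singleton, List.not_mem_nil, or_false] at hb
            rcases hb with rfl | rfl
            · -- b = e : but e ∈ menu is impossible since e ∈ E Z
              exfalso
              simp only [Finset.mem_filter] at hbY
              exact hbY.2 heE
            · exact absurd rfl hbx)
        rw [hC2, hval]; simp
      have hVeq : (Z ∪ {e} : Finset X) = Z ∪ {e} := rfl
      rw [hPI, hLZ, hLex] at hxin
      -- now hxin : x ∈ L (Z ∪ {e})
      have hLV : lexComp E C1 C2 (Z ∪ {e}) = Z := by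
        apply lex_eq E
        · rw [hAll1]; ext y
          simp only [Finset.mem_inter, Finset.mem_union, Finset.mem_singleton]
          constructor
          · rintro ⟨_, h⟩; exact h
          · intro h; exact ⟨Or.inl h, h⟩
        · intro y hy
          have := hch2 _ hy
          simp only [Finset.mem_filter, Finset.mem_union, Finset.mem_singleton] at this
          -- y ∈ Z ∪ {e} and y ∉ E Z; but C2 only picks from [e,x]
          -- we need y ∈ Z; since y ∈ C2 _, y ∈ [e,x]-set
          have hy2 : y ∈ topChoice (mkO enc henc [e, x]) 1 _ := hy
          rw [topChoice_mkO] at hy2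
          simp only [Finset.mem_filter, Finset.mem_union, Finset.mem_singleton,
            List.mem_cons, List.mem_singleton, List.not_mem_nil, or_false] at hy2
          obtain ⟨⟨hyY, hyE⟩, hyl, -⟩ := hy2
          rcases hyl with rfl | rfl
          · exact absurd heE hyE
          · rcases hyY with h | rfl
            · exact h
            · exact absurd heE hyE
      rw [hLV] at hxin
      exact hxZ hxin
    · exact Or.inl heZ
  · rintro e (heZ | heK)
    · exact Or.inr heZ
    · have := F1 enc henc hpres Z heK
      rcases this with h | h
      · exact Or.inl h
      · exact Or.inr h


lemma DomE.exists_not {E : Finset X → Set X} {Z : Finset X} (hdom : DomE E Z) :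
    ∃ x, x ∉ E Z ∧ x ∉ Z := by
  by_contra h
  push_neg at h
  apply hdom
  apply Set.eq_univ_iff_forall.2
  intro x
  by_cases hx : x ∈ E Z
  · exact Or.inl hx
  · exact Or.inr (h x hx)

/-- F3: `Dom` is closed under subsets. -/
lemma F3 {E : Finset X → Set X} (enc : X → ℕ) (henc : Function.Injective enc)
    (hpres : Hpres E) {Z Z' : Finset X} (hsub : Z ⊆ Z') (hdom : DomE E Z') : DomE E Z := by
  intro hfull
  obtain ⟨x, hxE, hxZ'⟩ := DomE.exists_not hdom
  have hxZ : x ∉ Z := fun h => hxZ' (hsub h)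
  have hxEZ : x ∈ E Z := by
    have : x ∈ E Z ∪ (Z : Set X) := hfull ▸ Set.mem_univ x
    rcases this with h | h
    · exact h
    · exact absurd h hxZ
  set C1 := topChoice (mkO enc henc Z'.toList) Z'.toList.length with hC1
  set C2 := topChoice (mkO enc henc (insert x Z').toList) (insert x Z').toList.length with hC2
  have hAll1 : ∀ Y, C1 Y = Y ∩ Z' := by
    intro Y; rw [hC1, topChoice_all' henc, filter_mem_toList]
  have hAll2 : ∀ Y, C2 Y = Y ∩ insert x Z' := by
    intro Y; rw [hC2, topChoice_all' henc, filter_mem_toList]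
  have hch2 : IsChoice C2 := isChoice_topChoice _ _
  have hPI := hpres_pi enc henc hpres Z'.toList Z'.toList.length
    (insert x Z').toList (insert x Z').toList.length (Z ∪ {x}) Z'
  have hLY : lexComp E C1 C2 (Z ∪ {x}) = Z := by
    apply lex_eq E
    · rw [hAll1]; ext u
      simp only [Finset.mem_inter, Finset.mem_union, Finset.mem_singleton]
      constructor
      · rintro ⟨(h | rfl), h2⟩
        · exact h
        · exact absurd h2 hxZ'
      · intro h; exact ⟨Or.inl h, hsub h⟩
    · refine (hch2 _).trans ?_
      intro u hu
      simp only [Finset.mem_filter, Finset.mem_union, Finset.mem_singleton] at hu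
      rcases hu.1 with h | rfl
      · exact h
      · exact absurd hxEZ hu.2
  have hLZ' : lexComp E C1 C2 Z' = Z' :=
    lex_eq E (by rw [hAll1, Finset.inter_self]) ((hch2 _).trans (Finset.filter_subset _ _))
  have hxin : x ∈ lexComp E C1 C2 ((Z ∪ {x}) ∪ Z') := by
    have harg : (Z ∪ {x}) ∪ Z' = insert x Z' := by
      ext u
      simp only [Finset.mem_union, Finset.mem_singleton, Finset.mem_insert]
      constructor
      · rintro ((h | rfl) | h)
        · exact Or.inr (hsub h)
        · exact Or.inl rfl
        · exact Or.inr h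
      · rintro (rfl | h)
        · exact Or.inl (Or.inr rfl)
        · exact Or.inr h
    rw [harg, lex_def]
    have h1 : C1 (insert x Z') = Z' := by
      rw [hAll1]; ext u
      simp only [Finset.mem_inter, Finset.mem_insert]
      constructor
      · rintro ⟨(rfl | h), h2⟩
        · exact absurd h2 hxZ'
        · exact h
      · intro h; exact ⟨Or.inr h, h⟩
    rw [h1]
    apply Finset.mem_union_right
    rw [hAll2]
    simp [hxE]
  rw [hPI, hLY, hLZ'] at hxin
  have : Z ∪ Z' = Z' := Finset.union_eq_right.2 hsub
  rw [this, hLZ'] at hxin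
  exact hxZ' hxin

/-- the case-A mechanism: a full `Z` and a `Dom`-style `W` of the same size, with a
fresh element `x` outside everything, are inconsistent. -/
lemma caseA {E : Finset X → Set X} (enc : X → ℕ) (henc : Function.Injective enc)
    (hpres : Hpres E) {Z W : Finset X} {x : X}
    (hfull : E Z ∪ (Z : Set X) = Set.univ) (hcard : Z.card = W.card)
    (hxEW : x ∉ E W) (hxZ : x ∉ Z) (hxW : x ∉ W) : False := by
  have hxEZ : x ∈ E Z := by
    have : x ∈ E Z ∪ (Z : Set X) := hfull ▸ Set.mem_univ x
    rcases this with h | h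
    · exact h
    · exact absurd h hxZ
  set l₁ : List X := W.toList ++ (Z \ W).toList with hl₁
  have hmeml₁ : ∀ u : X, u ∈ l₁ ↔ u ∈ Z ∪ W := by
    intro u
    simp only [hl₁, List.mem_append, Finset.mem_toList, Finset.mem_sdiff, Finset.mem_union]
    tauto
  have hndl₁ : l₁.Nodup := by
    refine List.Nodup.append (Finset.nodup_toList _) (Finset.nodup_toList _) ?_
    intro a ha hb
    rw [Finset.mem_toList] at ha
    rw [Finset.mem_toList, Finset.mem_sdiff] at hb
    exact hb.2 ha
  set l₂ : List X := (insert x (Z ∪ W)).toList with hl₂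
  set C1 := topChoice (mkO enc henc l₁) W.card with hC1
  set C2 := topChoice (mkO enc henc l₂) l₂.length with hC2
  have hAll2 : ∀ Y, C2 Y = Y ∩ insert x (Z ∪ W) := by
    intro Y; rw [hC2, topChoice_all' henc, hl₂, filter_mem_toList]
  have hch2 : IsChoice C2 := isChoice_topChoice _ _
  have hPI := hpres_pi enc henc hpres l₁ W.card l₂ l₂.length (Z ∪ {x}) W
  -- C1 at Z ∪ {x}
  have hC1Y : C1 (Z ∪ {x}) = Z := by
    rw [hC1]
    have hfil : (Z ∪ {x}).filter (· ∈ l₁) = Z := by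
      ext u
      simp only [Finset.mem_filter, Finset.mem_union, Finset.mem_singleton, hmeml₁,
        Finset.mem_union]
      constructor
      · rintro ⟨(h | rfl), h2⟩
        · exact h
        · rcases h2 with h | h
          · exact absurd h hxZ
          · exact absurd h hxW
      · intro h; exact ⟨Or.inl h, Or.inl h⟩
    rw [topChoice_all henc _ _ _ (le_of_eq (by rw [hfil, hcard])), hfil]
  have hC1W : C1 W = W := by
    rw [hC1]
    have hfil : W.filter (· ∈ l₁) = W := by
      ext u
      simp only [Finset.mem_filter, hmeml₁, Finset.mem_union]
      tauto
    rw [topChoice_all henc _ _ _ (le_of_eq (by rw [hfil])), hfil]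
  -- C1 via BLOCK when W ⊆ Y
  have hC1blk : ∀ Y : Finset X, W ⊆ Y → C1 Y = W := by
    intro Y hWY
    rw [hC1]
    have hq : W.card = W.toList.length := (Finset.length_toList W).symm
    rw [hq, hl₁, topChoice_block henc _ _ (by rw [← hl₁]; exact hndl₁) Y
      (fun a ha => hWY (Finset.mem_toList.1 ha))]
    exact Finset.toList_toFinset W
  have hLY : lexComp E C1 C2 (Z ∪ {x}) = Z := by
    apply lex_eq E hC1Y
    refine (hch2 _).trans ?_
    intro u hu
    simp only [Finset.mem_filter, Finset.mem_union, Finset.mem_singleton] at hu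
    rcases hu.1 with h | rfl
    · exact h
    · exact absurd hxEZ hu.2
  have hLW : lexComp E C1 C2 W = W :=
    lex_eq E hC1W ((hch2 _).trans (Finset.filter_subset _ _))
  have hxin : x ∈ lexComp E C1 C2 ((Z ∪ {x}) ∪ W) := by
    rw [lex_def, hC1blk _ (fun a ha => Finset.mem_union_right _ ha)]
    apply Finset.mem_union_right
    rw [hAll2]
    simp [hxEW]
  rw [hPI, hLY, hLW] at hxin
  have hxV : x ∈ lexComp E C1 C2 (Z ∪ W) := hxin
  have : lexComp E C1 C2 (Z ∪ W) ⊆ Z ∪ W :=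
    lex_subset E (fun Y => by rw [hC1]; exact topChoice_subset _ _ _) hch2 _
  have := this hxV
  rcases Finset.mem_union.1 this with h | h
  · exact hxZ h
  · exact hxW h


/-- MECH1: corner case with `T = insert e (W.erase y)` full. -/
lemma mech1 {E : Finset X → Set X} (enc : X → ℕ) (henc : Function.Injective enc)
    (hpres : Hpres E) {Z W : Finset X} {x y e : X}
    (hfullZ : E Z ∪ (Z : Set X) = Set.univ)
    (hfullT : E (insert e (W.erase y)) ∪ ((insert e (W.erase y) : Finset X) : Set X) = Set.univ)
    (hcard : Z.card = W.card)
    (hyW : y ∈ W) (hyZ : y ∉ Z)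
    (heZ : e ∉ Z) (heW : e ∉ W) (heEW : e ∈ E W)
    (hxZ : x ∈ Z) (hxW : x ∉ W) (hxEW : x ∉ E W) : False := by
  set T : Finset X := insert e (W.erase y) with hT
  have hex : e ≠ x := fun h => heZ (h ▸ hxZ)
  have hey : e ≠ y := fun h => heW (h ▸ hyW)
  have hxy : x ≠ y := fun h => hyZ (h ▸ hxZ)
  have heT : e ∉ W.erase y := fun h => heW (Finset.mem_of_mem_erase h)
  have hWpos : 0 < W.card := Finset.card_pos.2 ⟨y, hyW⟩
  set l1p : List X := (W.erase y).toList ++ [y] with hl1p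
  set l₁ : List X := l1p ++ [e] with hl₁
  have hl1pset : l1p.toFinset = W := by
    rw [hl1p]
    ext u
    simp only [List.toFinset_append, Finset.mem_union, List.mem_toFinset, Finset.mem_toList,
      List.toFinset_cons, List.toFinset_nil, insert_empty_eq, Finset.mem_insert,
      Finset.mem_singleton, Finset.mem_erase]
    constructor
    · rintro (⟨_, h⟩ | rfl)
      · exact h
      · exact hyW
    · intro h
      by_cases hu : u = y
      · exact Or.inr hu
      · exact Or.inl ⟨hu, h⟩
  have hndl1p : l1p.Nodup := by
    refine List.Nodup.append (Finset.nodup_toList _) (List.nodup_singleton y) ?_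
    intro a ha hb
    rw [Finset.mem_toList, Finset.mem_erase] at ha
    rw [List.mem_singleton] at hb
    exact ha.1 hb
  have hndl₁ : l₁.Nodup := by
    refine List.Nodup.append hndl1p (List.nodup_singleton e) ?_
    intro a ha hb
    rw [List.mem_singleton] at hb
    subst hb
    have : a ∈ l1p.toFinset := List.mem_toFinset.2 ha
    rw [hl1pset] at this
    exact heW this
  have hl1plen : l1p.length = W.card := by
    rw [hl1p, List.length_append, List.length_singleton, Finset.length_toList,
      Finset.card_erase_of_mem hyW]
    omega
  have hmeml₁ : ∀ u : X, u ∈ l₁ ↔ u ∈ W ∨ u = e := by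
    intro u
    rw [hl₁, List.mem_append, List.mem_singleton]
    constructor
    · rintro (h | rfl)
      · exact Or.inl (by rw [← hl1pset]; exact List.mem_toFinset.2 h)
      · exact Or.inr rfl
    · rintro (h | rfl)
      · exact Or.inl (List.mem_toFinset.1 (by rw [hl1pset]; exact h))
      · exact Or.inr rfl
  set C1 := topChoice (mkO enc henc l₁) W.card with hC1
  set C2 := topChoice (mkO enc henc [e, x, y]) 1 with hC2
  have hch2 : IsChoice C2 := isChoice_topChoice _ _
  have hTcard : T.card = W.card := by
    rw [hT, Finset.card_insert_of_notMem heT, Finset.card_erase_of_mem hyW]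
    omega
  have hPI := hpres_pi enc henc hpres l₁ W.card [e, x, y] 1
    (insert e (Z ∪ W.erase y)) (insert e W)
  -- C1 at Y := insert e (Z ∪ W.erase y)
  have hC1Y : C1 (insert e (Z ∪ W.erase y)) = T := by
    rw [hC1]
    have hfil : (insert e (Z ∪ W.erase y)).filter (· ∈ l₁) = T := by
      ext u
      rw [Finset.mem_filter, hmeml₁ u, hT, Finset.mem_insert, Finset.mem_insert,
        Finset.mem_union]
      constructor
      · rintro ⟨h1, h2⟩
        by_cases hue : u = e
        · exact Or.inl hue
        · refine Or.inr ?_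
          rcases h2 with h2 | h2
          · rcases h1 with h1 | h1
            · exact absurd h1 hue
            · rcases h1 with h1 | h1
              · exact Finset.mem_erase.2 ⟨fun hy' => hyZ (hy' ▸ h1), h2⟩
              · exact h1
          · exact absurd h2 hue
      · rintro (rfl | h)
        · exact ⟨Or.inl rfl, Or.inr rfl⟩
        · exact ⟨Or.inr (Or.inr h), Or.inl (Finset.mem_of_mem_erase h)⟩
    rw [topChoice_all henc _ _ _ (le_of_eq (by rw [hfil, hTcard])), hfil]
  -- C1 via BLOCK when W ⊆ Y
  have hC1blk : ∀ Y : Finset X, W ⊆ Y → C1 Y = W := by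
    intro Y hWY
    rw [hC1, hl₁]
    have hq : W.card = l1p.length := hl1plen.symm
    rw [hq, topChoice_block henc _ _ (by rw [← hl₁]; exact hndl₁) Y
      (fun a ha => hWY (by rw [← hl1pset]; exact List.mem_toFinset.2 ha))]
    exact hl1pset
  have hLY : lexComp E C1 C2 (insert e (Z ∪ W.erase y)) = T := by
    apply lex_eq E hC1Y
    refine (hch2 _).trans ?_
    intro u hu
    simp only [Finset.mem_filter] at hu
    have : u ∈ E T ∪ (T : Set X) := hfullT ▸ Set.mem_univ u
    rcases this with h | h
    · exact absurd h hu.2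
    · exact h
  have hLY' : lexComp E C1 C2 (insert e W) = W := by
    apply lex_eq E (hC1blk _ (Finset.subset_insert _ _))
    refine (hch2 _).trans ?_
    intro u hu
    simp only [Finset.mem_filter, Finset.mem_insert] at hu
    rcases hu.1 with rfl | h
    · exact absurd heEW hu.2
    · exact h
  have hxin : x ∈ lexComp E C1 C2 (insert e (Z ∪ W.erase y) ∪ insert e W) := by
    have harg : insert e (Z ∪ W.erase y) ∪ insert e W = insert e (Z ∪ W) := by
      ext u
      simp only [Finset.mem_union, Finset.mem_insert, Finset.mem_erase]
      constructor
      · rintro ((rfl | (h | ⟨_, h⟩)) | (rfl | h))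
        · exact Or.inl rfl
        · exact Or.inr (Or.inl h)
        · exact Or.inr (Or.inr h)
        · exact Or.inl rfl
        · exact Or.inr (Or.inr h)
      · rintro (rfl | (h | h))
        · exact Or.inl (Or.inl rfl)
        · exact Or.inl (Or.inr (Or.inl h))
        · exact Or.inr (Or.inr h)
    rw [harg, lex_def, hC1blk _ (fun a ha => Finset.mem_insert_of_mem (Finset.mem_union_right _ ha))]
    apply Finset.mem_union_right
    have hxmenu : x ∈ (insert e (Z ∪ W)).filter (fun u => u ∉ E W) := by
      simp only [Finset.mem_filter, Finset.mem_insert, Finset.mem_union]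
      exact ⟨Or.inr (Or.inl hxZ), hxEW⟩
    have hix : List.idxOf x [e, x, y] < List.idxOf y [e, x, y] := by
      rw [List.idxOf_cons_ne _ hex, List.idxOf_cons_self,
        List.idxOf_cons_ne _ hey, List.idxOf_cons_ne _ hxy, List.idxOf_cons_self]
      omega
    have hval := topChoice_take1 henc [e, x, y] _ x (by simp) hxmenu
      (by
        intro b hb hbY hbx
        simp only [List.mem_cons, List.mem_singleton, List.not_mem_nil, or_false] at hb
        rcases hb with rfl | rfl | rfl
        · exfalso
          simp only [Finset.mem_filter] at hbY
          exact hbY.2 heEW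
        · exact absurd rfl hbx
        · exact hix)
    rw [hC2, hval]
    simp
  rw [hPI, hLY, hLY'] at hxin
  have harg2 : T ∪ W = insert e W := by
    rw [hT]
    ext u
    simp only [Finset.mem_union, Finset.mem_insert, Finset.mem_erase]
    constructor
    · rintro ((rfl | ⟨_, h⟩) | h)
      · exact Or.inl rfl
      · exact Or.inr h
      · exact Or.inr h
    · rintro (rfl | h)
      · exact Or.inl (Or.inl rfl)
      · exact Or.inr h
  rw [harg2, hLY'] at hxin
  exact hxW hxin

/-- MECH2: corner case with `T = insert e (W.erase y)` in `Dom`. -/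
lemma mech2 {E : Finset X → Set X} (enc : X → ℕ) (henc : Function.Injective enc)
    (hpres : Hpres E) {Z W : Finset X} {y e : X}
    (hfullZ : E Z ∪ (Z : Set X) = Set.univ)
    (hcard : Z.card = W.card)
    (hyW : y ∈ W) (hyZ : y ∉ Z)
    (heZ : e ∉ Z) (heW : e ∉ W)
    (hyET : y ∉ E (insert e (W.erase y))) : False := by
  set T : Finset X := insert e (W.erase y) with hT
  have hey : e ≠ y := fun h => heW (h ▸ hyW)
  have hyT : y ∉ T := by
    rw [hT, Finset.mem_insert]
    rintro (rfl | h)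
    · exact hey rfl
    · exact (Finset.notMem_erase y W) h
  have hWZpos : 0 < (W \ Z).card := Finset.card_pos.2 ⟨y, Finset.mem_sdiff.2 ⟨hyW, hyZ⟩⟩
  set l1p : List X := (W ∩ Z).toList ++ e :: ((W \ Z).erase y).toList with hl1p
  set l₁ : List X := l1p ++ (Z \ W).toList with hl₁
  have hl1pset : l1p.toFinset = T := by
    rw [hl1p, hT]
    ext u
    simp only [List.toFinset_append, Finset.mem_union, List.mem_toFinset, Finset.mem_toList,
      List.toFinset_cons, Finset.mem_insert, Finset.mem_inter, Finset.mem_erase,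
      Finset.mem_sdiff]
    constructor
    · rintro (⟨h1, h2⟩ | (rfl | ⟨h1, h2, h3⟩))
      · refine Or.inr ⟨?_, h1⟩
        rintro rfl
        exact hyZ h2
      · exact Or.inl rfl
      · exact Or.inr ⟨h1, h2⟩
    · rintro (rfl | ⟨h1, h2⟩)
      · exact Or.inr (Or.inl rfl)
      · by_cases hu : u ∈ Z
        · exact Or.inl ⟨h2, hu⟩
        · exact Or.inr (Or.inr ⟨h1, h2, hu⟩)
  have hndl1p : l1p.Nodup := by
    rw [hl1p]
    refine List.Nodup.append (Finset.nodup_toList _) ?_ ?_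
    · refine List.nodup_cons.2 ⟨?_, Finset.nodup_toList _⟩
      rw [Finset.mem_toList, Finset.mem_erase, Finset.mem_sdiff]
      rintro ⟨_, h, _⟩
      exact heW h
    · intro a ha hb
      rw [Finset.mem_toList, Finset.mem_inter] at ha
      rcases List.mem_cons.1 hb with rfl | hb2
      · exact heW ha.1
      · rw [Finset.mem_toList, Finset.mem_erase, Finset.mem_sdiff] at hb2
        exact hb2.2.2 ha.2
  have hndl₁ : l₁.Nodup := by
    rw [hl₁]
    refine List.Nodup.append hndl1p (Finset.nodup_toList _) ?_
    intro a ha hb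
    rw [Finset.mem_toList, Finset.mem_sdiff] at hb
    have haT : a ∈ T := by rw [← hl1pset]; exact List.mem_toFinset.2 ha
    rw [hT, Finset.mem_insert] at haT
    rcases haT with rfl | h
    · exact heZ hb.1
    · exact hb.2 (Finset.mem_of_mem_erase h)
  have hl1plen : l1p.length = W.card := by
    rw [hl1p, List.length_append, List.length_cons, Finset.length_toList, Finset.length_toList,
      Finset.card_erase_of_mem (Finset.mem_sdiff.2 ⟨hyW, hyZ⟩)]
    have := Finset.card_inter_add_card_sdiff W Z
    omega
  have hmeml₁ : ∀ u : X, u ∈ l₁ ↔ u ∈ T ∨ u ∈ Z \ W := by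
    intro u
    rw [hl₁, List.mem_append, Finset.mem_toList]
    constructor
    · rintro (h | h)
      · exact Or.inl (by rw [← hl1pset]; exact List.mem_toFinset.2 h)
      · exact Or.inr h
    · rintro (h | h)
      · exact Or.inl (List.mem_toFinset.1 (by rw [hl1pset]; exact h))
      · exact Or.inr h
  set C1 := topChoice (mkO enc henc l₁) W.card with hC1
  set l₂ : List X := (insert y T).toList with hl₂
  set C2 := topChoice (mkO enc henc l₂) l₂.length with hC2
  have hAll2 : ∀ Y, C2 Y = Y ∩ insert y T := by
    intro Y; rw [hC2, topChoice_all' henc, hl₂, filter_mem_toList]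
  have hch2 : IsChoice C2 := isChoice_topChoice _ _
  have hPI := hpres_pi enc henc hpres l₁ W.card l₂ l₂.length (Z ∪ T) (insert y Z)
  have hC1blk : ∀ Y : Finset X, T ⊆ Y → C1 Y = T := by
    intro Y hTY
    rw [hC1, hl₁]
    have hq : W.card = l1p.length := hl1plen.symm
    rw [hq, topChoice_block henc _ _ (by rw [← hl₁]; exact hndl₁) Y
      (fun a ha => hTY (by rw [← hl1pset]; exact List.mem_toFinset.2 ha))]
    exact hl1pset
  have hC1Y' : C1 (insert y Z) = Z := by
    rw [hC1]
    have hfil : (insert y Z).filter (· ∈ l₁) = Z := by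
      ext u
      simp only [Finset.mem_filter, Finset.mem_insert, hmeml₁, Finset.mem_sdiff]
      constructor
      · rintro ⟨rfl | h, h2⟩
        · rcases h2 with h2 | h2
          · exact absurd h2 hyT
          · exact absurd h2.1 hyZ
        · exact h
      · intro h
        refine ⟨Or.inr h, ?_⟩
        by_cases hu : u ∈ W
        · refine Or.inl ?_
          rw [hT, Finset.mem_insert]
          refine Or.inr (Finset.mem_erase.2 ⟨?_, hu⟩)
          rintro rfl
          exact hyZ h
        · exact Or.inr ⟨h, hu⟩
    rw [topChoice_all henc _ _ _ (le_of_eq (by rw [hfil, hcard])), hfil]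
  have hLY : lexComp E C1 C2 (Z ∪ T) = T := by
    apply lex_eq E (hC1blk _ (Finset.subset_union_right))
    intro u hu
    rw [hAll2] at hu
    simp only [Finset.mem_inter, Finset.mem_filter, Finset.mem_union, Finset.mem_insert] at hu
    obtain ⟨⟨hu1, _⟩, hu2⟩ := hu
    rcases hu2 with rfl | h
    · exfalso
      rcases hu1 with h | h
      · exact hyZ h
      · exact hyT h
    · exact h
  have hLY' : lexComp E C1 C2 (insert y Z) = Z := by
    apply lex_eq E hC1Y'
    refine (hch2 _).trans ?_
    intro u hu
    simp only [Finset.mem_filter, Finset.mem_insert] at hu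
    rcases hu.1 with rfl | h
    · exfalso
      apply hu.2
      have : u ∈ E Z ∪ (Z : Set X) := hfullZ ▸ Set.mem_univ u
      rcases this with h | h
      · exact h
      · exact absurd h hyZ
    · exact h
  have hyin : y ∈ lexComp E C1 C2 ((Z ∪ T) ∪ insert y Z) := by
    have harg : (Z ∪ T) ∪ insert y Z = insert y (Z ∪ T) := by
      ext u
      simp only [Finset.mem_union, Finset.mem_insert]
      tauto
    rw [harg, lex_def, hC1blk _ (fun a ha => Finset.mem_insert_of_mem (Finset.mem_union_right _ ha))]
    apply Finset.mem_union_right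
    rw [hAll2]
    simp [hyET]
  rw [hPI, hLY, hLY'] at hyin
  have harg2 : T ∪ Z = Z ∪ T := Finset.union_comm _ _
  rw [harg2, hLY] at hyin
  exact hyT hyin


/-- F5: a strictly full set and a `Dom` set cannot have the same cardinality. -/
lemma F5 [Infinite X] {E : Finset X → Set X} (enc : X → ℕ) (henc : Function.Injective enc)
    (hpres : Hpres E) {Z W : Finset X}
    (hfullZ : E Z ∪ (Z : Set X) = Set.univ)
    (hstrict : ((Z : Set X) ∪ E ∅) ≠ Set.univ)
    (hdomW : DomE E W) (hcard : Z.card = W.card) : False := by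
  have hWform := F2 enc henc hpres W hdomW
  by_cases hc : ∃ v : X, v ∉ E W ∧ v ∉ Z ∧ v ∉ W
  · obtain ⟨v, h1, h2, h3⟩ := hc
    exact caseA enc henc hpres hfullZ hcard h1 h2 h3
  push_neg at hc
  obtain ⟨x, hxEW, hxW⟩ := DomE.exists_not hdomW
  have hxZ : x ∈ Z := by
    by_contra h
    exact hxW (hc x hxEW h)
  have hy : ∃ y, y ∉ ((Z : Set X) ∪ E ∅) := by
    by_contra h
    push_neg at h
    exact hstrict (Set.eq_univ_iff_forall.2 h)
  obtain ⟨y, hyn⟩ := hy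
  have hyZ : y ∉ Z := fun h => hyn (Or.inl h)
  have hyK : y ∉ E ∅ := fun h => hyn (Or.inr h)
  have hyW : y ∈ W := by
    by_contra hyW'
    have h1 : y ∈ E W := by
      by_contra h
      exact hyW' (hc y h hyZ)
    have h2 : y ∈ (W : Set X) ∪ E ∅ := hWform ▸ (Or.inl h1 : y ∈ E W ∪ (W : Set X))
    rcases h2 with h | h
    · exact hyW' h
    · exact hyK h
  obtain ⟨e, he⟩ := Infinite.exists_notMem_finset (Z ∪ W)
  have heZ : e ∉ Z := fun h => he (Finset.mem_union_left _ h)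
  have heW : e ∉ W := fun h => he (Finset.mem_union_right _ h)
  have heEW : e ∈ E W := by
    by_contra h
    exact heW (hc e h heZ)
  set T : Finset X := insert e (W.erase y) with hT
  by_cases hTfull : E T ∪ (T : Set X) = Set.univ
  · exact mech1 enc henc hpres hfullZ hTfull hcard hyW hyZ heZ heW heEW hxZ hxW hxEW
  · have hTform := F2 enc henc hpres T hTfull
    have hyT : y ∉ T := by
      rw [hT, Finset.mem_insert]
      rintro (rfl | h)
      · exact heW hyW
      · exact (Finset.notMem_erase y W) h
    have hyET : y ∉ E T := by
      intro h
      have : y ∈ (T : Set X) ∪ E ∅ := hTform ▸ (Or.inl h : y ∈ E T ∪ (T : Set X))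
      rcases this with h2 | h2
      · exact hyT h2
      · exact hyK h2
    exact mech2 enc henc hpres hfullZ hcard hyW hyZ heZ heW hyET

/-- Part (1): the gross exclusion is threshold linear. -/
lemma threshold [Infinite X] {E : Finset X → Set X} (enc : X → ℕ) (henc : Function.Injective enc)
    (hpres : Hpres E) :
    ∃ t : ℕ∞, ∀ Z : Finset X,
      ((Z.card : ℕ∞) < t → E Z ∪ (Z : Set X) = (Z : Set X) ∪ E ∅) ∧
      (¬ (Z.card : ℕ∞) < t → E Z ∪ (Z : Set X) = Set.univ) := by
  by_cases hbad : ∃ n : ℕ, ∃ Z : Finset X, Z.card = n ∧ E Z ∪ (Z : Set X) ≠ (Z : Set X) ∪ E ∅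
  · classical
    set s := {n : ℕ | ∃ Z : Finset X, Z.card = n ∧ E Z ∪ (Z : Set X) ≠ (Z : Set X) ∪ E ∅} with hs
    have hsne : s.Nonempty := by
      obtain ⟨n, Z, h1, h2⟩ := hbad
      exact ⟨n, Z, h1, h2⟩
    obtain ⟨Z₀, hZ₀card, hZ₀⟩ := Nat.sInf_mem hsne
    have hfull₀ : E Z₀ ∪ (Z₀ : Set X) = Set.univ := by
      by_contra h
      exact hZ₀ (F2 enc henc hpres Z₀ h)
    have hstrict₀ : ((Z₀ : Set X) ∪ E ∅) ≠ Set.univ := by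
      intro h
      exact hZ₀ (hfull₀.trans h.symm)
    refine ⟨((sInf s : ℕ) : ℕ∞), fun Z => ⟨?_, ?_⟩⟩
    · intro hlt
      by_contra h
      have hmem : Z.card ∈ s := ⟨Z, rfl, h⟩
      have hle : sInf s ≤ Z.card := Nat.sInf_le hmem
      have : ((sInf s : ℕ) : ℕ∞) ≤ (Z.card : ℕ∞) := by exact_mod_cast hle
      exact absurd hlt (not_lt.2 this)
    · intro hnlt
      have hge : sInf s ≤ Z.card := by
        by_contra h
        push_neg at h
        exact hnlt (by exact_mod_cast h)
      by_contra hZfull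
      obtain ⟨W₁, hW₁sub, hW₁card⟩ := Finset.exists_subset_card_eq hge
      have hdomW₁ : DomE E W₁ := F3 enc henc hpres hW₁sub hZfull
      exact F5 enc henc hpres hfull₀ hstrict₀ hdomW₁ (by rw [hZ₀card, hW₁card])
  · push_neg at hbad
    refine ⟨⊤, fun Z => ⟨fun _ => hbad Z.card Z rfl, fun h => absurd ?_ h⟩⟩
    exact WithTop.coe_lt_top _

/-- F6core: the reuse-transfer mechanism. -/
lemma F6core {E : Finset X → Set X} (enc : X → ℕ) (henc : Function.Injective enc)
    (hpres : Hpres E) {Z W : Finset X} {x u : X}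
    (hcard : W.card ≤ Z.card)
    (hxZ : x ∈ Z) (hxW : x ∈ W) (hxEZ : x ∈ E Z) (hxEW : x ∉ E W)
    (huZ : u ∉ Z) (huW : u ∉ W) (huEZ : u ∉ E Z) : False := by
  have hux : u ≠ x := fun h => huZ (h ▸ hxZ)
  set l₁ : List X := Z.toList ++ (W \ Z).toList with hl₁
  have hmeml₁ : ∀ v : X, v ∈ l₁ ↔ v ∈ Z ∪ W := by
    intro v
    simp only [hl₁, List.mem_append, Finset.mem_toList, Finset.mem_sdiff, Finset.mem_union]
    tauto
  have hndl₁ : l₁.Nodup := by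
    refine List.Nodup.append (Finset.nodup_toList _) (Finset.nodup_toList _) ?_
    intro a ha hb
    rw [Finset.mem_toList] at ha
    rw [Finset.mem_toList, Finset.mem_sdiff] at hb
    exact hb.2 ha
  set C1 := topChoice (mkO enc henc l₁) Z.card with hC1
  set C2 := topChoice (mkO enc henc [x, u]) 1 with hC2
  have hch2 : IsChoice C2 := isChoice_topChoice _ _
  have hC1blk : ∀ Y : Finset X, Z ⊆ Y → C1 Y = Z := by
    intro Y hZY
    rw [hC1, hl₁]
    have hq : Z.card = Z.toList.length := (Finset.length_toList Z).symm
    rw [hq, topChoice_block henc _ _ (by rw [← hl₁]; exact hndl₁) Y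
      (fun a ha => hZY (Finset.mem_toList.1 ha))]
    exact Finset.toList_toFinset Z
  have hPI := hpres_pi enc henc hpres l₁ Z.card [x, u] 1 (Z \ W) (W ∪ {u})
  have hLY : lexComp E C1 C2 (Z \ W) = Z \ W := by
    apply lex_eq E
    · rw [hC1]
      have hfil : (Z \ W).filter (· ∈ l₁) = Z \ W := by
        ext v
        simp only [Finset.mem_filter, hmeml₁, Finset.mem_sdiff, Finset.mem_union]
        tauto
      rw [topChoice_all henc _ _ _ (le_trans (le_of_eq (congrArg Finset.card hfil))
        (Finset.card_le_card Finset.sdiff_subset)), hfil]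
    · exact (hch2 _).trans (Finset.filter_subset _ _)
  have hLY' : lexComp E C1 C2 (W ∪ {u}) = W := by
    apply lex_eq E
    · rw [hC1]
      have hfil : (W ∪ {u}).filter (· ∈ l₁) = W := by
        ext v
        simp only [Finset.mem_filter, hmeml₁, Finset.mem_union, Finset.mem_singleton]
        constructor
        · rintro ⟨(h | rfl), h2⟩
          · exact h
          · rcases h2 with h | h
            · exact absurd h huZ
            · exact absurd h huW
        · intro h
          exact ⟨Or.inl h, Or.inr h⟩
      rw [topChoice_all henc _ _ _ (le_trans (le_of_eq (congrArg Finset.card hfil)) hcard), hfil]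
    · have hxmenu : x ∈ (W ∪ {u}).filter (fun v => v ∉ E W) := by
        simp only [Finset.mem_filter, Finset.mem_union, Finset.mem_singleton]
        exact ⟨Or.inl hxW, hxEW⟩
      have hval := topChoice_take1 henc [x, u] _ x (by simp) hxmenu
        (by
          intro b hb _ hbx
          simp only [List.mem_cons, List.mem_singleton, List.not_mem_nil, or_false] at hb
          rcases hb with rfl | rfl
          · exact absurd rfl hbx
          · exact indexOf_pair_lt hux.symm)
      rw [hC2, hval]
      intro v hv
      rw [Finset.mem_singleton] at hv
      subst hv
      exact hxW
  have huin : u ∈ lexComp E C1 C2 ((Z \ W) ∪ (W ∪ {u})) := by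
    have harg : (Z \ W) ∪ (W ∪ {u}) = insert u (Z ∪ W) := by
      ext v
      simp only [Finset.mem_union, Finset.mem_sdiff, Finset.mem_singleton, Finset.mem_insert]
      tauto
    rw [harg, lex_def, hC1blk _ (fun a ha => Finset.mem_insert_of_mem (Finset.mem_union_left _ ha))]
    apply Finset.mem_union_right
    have humenu : u ∈ (insert u (Z ∪ W)).filter (fun v => v ∉ E Z) := by
      simp [huEZ]
    have hval := topChoice_take1 henc [x, u] _ u (by simp) humenu
      (by
        intro b hb hbY hbu
        simp only [List.mem_cons, List.mem_singleton, List.not_mem_nil, or_false] at hb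
        rcases hb with rfl | rfl
        · exfalso
          simp only [Finset.mem_filter] at hbY
          exact hbY.2 hxEZ
        · exact absurd rfl hbu)
    rw [hC2, hval]
    simp
  rw [hPI, hLY, hLY'] at huin
  have harg2 : (Z \ W) ∪ W = Z ∪ W := by
    ext v
    simp only [Finset.mem_union, Finset.mem_sdiff]
    tauto
  rw [harg2] at huin
  have hLV : lexComp E C1 C2 (Z ∪ W) ⊆ Z ∪ W :=
    lex_subset E (fun Y => by rw [hC1]; exact topChoice_subset _ _ _) hch2 _
  rcases Finset.mem_union.1 (hLV huin) with h | h
  · exact huZ h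
  · exact huW h

/-- F6: reuse transfers from smaller to weakly larger `Dom` sets. -/
lemma F6 [Infinite X] {E : Finset X → Set X} (enc : X → ℕ) (henc : Function.Injective enc)
    (hpres : Hpres E) {Z W : Finset X} {x : X}
    (hdomZ : DomE E Z) (hdomW : DomE E W)
    (hcard : W.card ≤ Z.card)
    (hxZ : x ∈ Z) (hxW : x ∈ W) (hxEW : x ∉ E W)
    (hkey : ∀ W' : Finset X, W'.card ≤ Z.card → ((W' : Set X) ∪ E ∅ ≠ Set.univ) → DomE E W') :
    x ∉ E Z := by
  by_contra hxEZ
  have hZform := F2 enc henc hpres Z hdomZ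
  have hWform := F2 enc henc hpres W hdomW
  by_cases hc : ∃ u, u ∉ E Z ∧ u ∉ Z ∧ u ∉ W
  · obtain ⟨u, h1, h2, h3⟩ := hc
    exact F6core enc henc hpres hcard hxZ hxW hxEZ hxEW h2 h3 h1
  push_neg at hc
  obtain ⟨y, hyEZ, hyZ⟩ := DomE.exists_not hdomZ
  have hyW : y ∈ W := hc y hyEZ hyZ
  have hyK : y ∉ E ∅ := by
    intro h
    have := F1 enc henc hpres Z h
    rcases this with h2 | h2
    · exact hyEZ h2
    · exact hyZ h2
  obtain ⟨e, he⟩ := Infinite.exists_notMem_finset (Z ∪ W)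
  have heZ : e ∉ Z := fun h => he (Finset.mem_union_left _ h)
  have heW : e ∉ W := fun h => he (Finset.mem_union_right _ h)
  have heEZ : e ∈ E Z := by
    by_contra h
    exact heW (hc e h heZ)
  have heK : e ∈ E ∅ := by
    have : e ∈ (Z : Set X) ∪ E ∅ := hZform ▸ (Or.inl heEZ : e ∈ E Z ∪ (Z : Set X))
    rcases this with h | h
    · exact absurd h heZ
    · exact h
  have hye : y ≠ e := fun h => hyK (h ▸ heK)
  set W' : Finset X := insert e (W.erase y) with hW'
  have heWe : e ∉ W.erase y := fun h => heW (Finset.mem_of_mem_erase h)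
  have hW'card : W'.card = W.card := by
    rw [hW', Finset.card_insert_of_notMem heWe, Finset.card_erase_of_mem hyW]
    have : 0 < W.card := Finset.card_pos.2 ⟨y, hyW⟩
    omega
  have hyW' : y ∉ W' := by
    rw [hW', Finset.mem_insert]
    rintro (h | h)
    · exact hye h
    · exact (Finset.notMem_erase y W) h
  have hdomW' : DomE E W' := by
    apply hkey W' (by rw [hW'card]; exact hcard)
    intro hcontra
    have : y ∈ (W' : Set X) ∪ E ∅ := hcontra ▸ Set.mem_univ y
    rcases this with h | h
    · exact hyW' h
    · exact hyK h
  have hW'form := F2 enc henc hpres W' hdomW'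
  have hxy : x ≠ y := fun h => hyZ (h ▸ hxZ)
  have hxW'mem : x ∈ W' := by
    rw [hW']
    exact Finset.mem_insert_of_mem (Finset.mem_erase.2 ⟨hxy, hxW⟩)
  by_cases hx' : x ∈ E W'
  · -- pair (W', W) with a fresh u from Dom W
    obtain ⟨u, huEW, huW⟩ := DomE.exists_not hdomW
    have huK : u ∉ E ∅ := by
      intro h
      have := F1 enc henc hpres W h
      rcases this with h2 | h2
      · exact huEW h2
      · exact huW h2
    have hue : u ≠ e := fun h => huK (h ▸ heK)
    have huW' : u ∉ W' := by
      rw [hW', Finset.mem_insert]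
      rintro (h | h)
      · exact hue h
      · exact huW (Finset.mem_of_mem_erase h)
    have huEW' : u ∉ E W' := by
      intro h
      have : u ∈ (W' : Set X) ∪ E ∅ := hW'form ▸ (Or.inl h : u ∈ E W' ∪ (W' : Set X))
      rcases this with h2 | h2
      · exact huW' h2
      · exact huK h2
    exact F6core enc henc hpres (le_of_eq hW'card.symm) hxW'mem hxW hx' hxEW huW' huW huEW'
  · -- pair (Z, W') with u := y
    have hyEZ' : y ∉ E Z := hyEZ
    exact F6core enc henc hpres (by rw [hW'card]; exact hcard) hxZ hxW'mem hxEZ hx' hyZ hyW' hyEZ'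

end Main
end PIWork

/-- **Claim (general necessary conditions).** If `L_E` preserves path
independence over responsive choice functions, then (1) the gross exclusion
`G_E : Z ↦ E(Z) ∪ Z` is threshold-linear, and (2) the reuse `R_E : Z ↦ Z \ E(Z)`
is cardinal-linear on `Dom(R_E) = {Z : G_E(Z) ≠ X}`. -/

theorem preserving_pi_necessary_conditions
    {X : Type*} [Countable X] [Infinite X] (E : Finset X → Set X)
    (hpres : ∀ C1 C2 : Finset X → Finset X, IsChoice C1 → IsChoice C2 →
      Responsive C1 → Responsive C2 → PathIndependent (lexComp E C1 C2)) :
    ThresholdLinear (fun Z : Finset X => E Z ∪ (Z : Set X)) ∧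
      ∃ T : ℕ → Set X, T 0 = ∅ ∧ Monotone T ∧
        ∀ Z : Finset X, E Z ∪ (Z : Set X) ≠ Set.univ →
          (Z : Set X) \ E Z = (Z : Set X) ∩ T Z.card := by
  obtain ⟨enc, henc⟩ := Countable.exists_injective_nat X
  have hpres' : PIWork.Hpres E := hpres
  obtain ⟨t, ht⟩ := PIWork.threshold enc henc hpres'
  constructor
  · refine ⟨t, fun Z => ⟨?_, ?_⟩⟩
    · intro hlt
      show E Z ∪ (Z : Set X) = (Z : Set X) ∪ (E ∅ ∪ ((∅ : Finset X) : Set X))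
      rw [(ht Z).1 hlt, Finset.coe_empty, Set.union_empty]
    · intro hnlt
      show E Z ∪ (Z : Set X) = Set.univ
      exact (ht Z).2 hnlt
  · refine ⟨fun n => {x | ∃ W : Finset X, W.card ≤ n ∧ (E W ∪ (W : Set X) ≠ Set.univ) ∧
      x ∈ (W : Set X) ∧ x ∉ E W}, ?_, ?_, ?_⟩
    · apply Set.eq_empty_iff_forall_notMem.2
      rintro x ⟨W, hW0, -, hxW, -⟩
      have : W = ∅ := Finset.card_eq_zero.1 (Nat.le_zero.1 hW0)
      subst this
      simp at hxW
    · intro a b hab x hx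
      obtain ⟨W, h1, h⟩ := hx
      exact ⟨W, h1.trans hab, h⟩
    · intro Z hdomZ
      have hdom : PIWork.DomE E Z := hdomZ
      ext x
      simp only [Set.mem_diff, Set.mem_inter_iff, Set.mem_setOf_eq, Finset.mem_coe]
      constructor
      · rintro ⟨hxZ, hxE⟩
        exact ⟨hxZ, Z, le_refl _, hdomZ, hxZ, hxE⟩
      · rintro ⟨hxZ, W, hWcard, hWdom, hxW, hxEW⟩
        refine ⟨hxZ, ?_⟩
        have hkey : ∀ W' : Finset X, W'.card ≤ Z.card →
            ((W' : Set X) ∪ E ∅ ≠ Set.univ) → PIWork.DomE E W' := by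
          intro W' hle hne
          have hZlt : (Z.card : ℕ∞) < t := by
            by_contra h
            exact hdom ((ht Z).2 h)
          have hW'lt : (W'.card : ℕ∞) < t :=
            lt_of_le_of_lt (by exact_mod_cast hle) hZlt
          have heq := (ht W').1 hW'lt
          intro hfull
          exact hne (heq.symm.trans hfull)
        exact PIWork.F6 enc henc hpres' hdom hWdom hWcard
          (Finset.mem_coe.1 hxZ) (Finset.mem_coe.1 hxW) hxEW hkey
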